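/- There exists a reflexive, transitive, strongly convergent frame (W, R), a constant domain D, and a predicate interpretation P : D → W → Prop, and a world w ∈ W, such that [tB^MS] holds at w but [tB^MS] fails at some R-successor of w. That is, positive introspection [tB^MS]^x φ → [K][tB^MS]^x φ is not valid on the class of S4.2-constant-domain models. -/
import Mathlib


def RB {W : Type*} (R : W → W → Prop) (w u : W) : Prop := ∀ v, R w v → R v u

theorem tBMS_not_pos_introspective :
    ∃ (W : Type) (R : W → W → Prop) (D : Type) (P : D → W → Prop) (w : W),
      Nonempty D ∧
      (∀ x, R x x) ∧ (∀ x y z, R x y → R y z → R x z) ∧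
      (∀ x, ∃ u, ∀ v, R x v → R v u) ∧
      (∃ a, (∀ u, RB R w u → P a u) ∧ P a w) ∧
      (∃ v, R w v ∧ ¬ ∃ a, (∀ u, RB R v u → P a u) ∧ P a v) := by
  refine ⟨Fin 3, (· ≤ ·), Unit, fun _ u => u ≠ 1, 0, ⟨()⟩,
    fun x => le_refl x, fun x y z => le_trans,
    fun x => ⟨2, fun v _ => Fin.le_last v⟩,
    ⟨(), fun u h => ?_, by decide⟩,
    ⟨1, by decide, ?_⟩⟩
  · have h2 : (2:Fin 3) ≤ u := h 2 (by decide)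
    omega
  · rintro ⟨a, -, h⟩
    exact h rfl
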